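/- For every n ≥ 1 and all α, β, γ ∈ ℝ^{2^{n−1}}, there exist real numbers t_A and t'_A, indexed by the IZ-strings A of length n−1, such that blockdiag(U(α_1,β_1,γ_1),…,U(α_{2^{n−1}},β_{2^{n−1}},γ_{2^{n−1}})) = (∏_A exp(i t_A (A ⊗ σ3))) · blockdiag(R_Y(γ_1),…,R_Y(γ_{2^{n−1}})) · (∏_A exp(i t'_A (A ⊗ σ3))). The matrices A ⊗ σ3 are pairwise commuting diagonal matrices, so the two products are independent of the order of their factors. -/

import Mathlib

open Matrix

/-- The Pauli matrix `σ3`. -/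
noncomputable def σ3 : Matrix (Fin 2) (Fin 2) ℂ := !![1, 0; 0, -1]

/-- The 2×2 factor of an IZ-string: `σ3` if the bit is `true`, `I_2` otherwise. -/
noncomputable def izBit (b : Bool) : Matrix (Fin 2) (Fin 2) ℂ := if b then σ3 else 1

/-- Kronecker product `A ⊗ B` with a `2 × 2` last factor, realized on `Fin (k * 2)`. -/
noncomputable def kronLast {k : ℕ} (A : Matrix (Fin k) (Fin k) ℂ)
    (B : Matrix (Fin 2) (Fin 2) ℂ) : Matrix (Fin (k * 2)) (Fin (k * 2)) ℂ :=
  Matrix.of fun i j =>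
    A ⟨(i : ℕ) / 2, by omega⟩ ⟨(j : ℕ) / 2, by omega⟩ *
      B ⟨(i : ℕ) % 2, by omega⟩ ⟨(j : ℕ) % 2, by omega⟩

/-- `IZ n f` is the IZ-string `A_1 ⊗ ⋯ ⊗ A_n` of length `n`, where `A_i = σ3` if `f i = true`
and `A_i = I_2` if `f i = false`. -/
noncomputable def IZ : (n : ℕ) → (Fin n → Bool) → Matrix (Fin (2 ^ n)) (Fin (2 ^ n)) ℂ
  | 0, _ => 1
  | (n + 1), f => kronLast (IZ n fun i => f i.castSucc) (izBit (f (Fin.last n)))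

/-- The rotation gate `R_Z(θ) = diag(e^{iθ}, e^{-iθ})`. -/
noncomputable def RZ (θ : ℝ) : Matrix (Fin 2) (Fin 2) ℂ :=
  !![Complex.exp (Complex.I * θ), 0; 0, Complex.exp (-(Complex.I * θ))]

/-- The rotation gate `R_Y(θ) = !![cos θ, sin θ; -sin θ, cos θ]`. -/
noncomputable def RY (θ : ℝ) : Matrix (Fin 2) (Fin 2) ℂ :=
  !![(Real.cos θ : ℂ), (Real.sin θ : ℂ); -(Real.sin θ : ℂ), (Real.cos θ : ℂ)]

/-- The generic `2 × 2` special unitary matrix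
`U(α,β,γ) = !![e^{i(α+β)} cos γ, e^{i(α-β)} sin γ; -e^{-i(α-β)} sin γ, e^{-i(α+β)} cos γ]`. -/
noncomputable def Umat (α β γ : ℝ) : Matrix (Fin 2) (Fin 2) ℂ :=
  !![Complex.exp (Complex.I * (α + β)) * Real.cos γ,
      Complex.exp (Complex.I * (α - β)) * Real.sin γ;
    -(Complex.exp (-(Complex.I * (α - β))) * Real.sin γ),
      Complex.exp (-(Complex.I * (α + β))) * Real.cos γ]

/-- `blockDiag2 m M` is the `2m × 2m` block-diagonal matrix with the 2×2 diagonal blocks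
`M 0, M 1, …, M (m-1)`. -/
noncomputable def blockDiag2 (m : ℕ) (M : ℕ → Matrix (Fin 2) (Fin 2) ℂ) :
    Matrix (Fin (m * 2)) (Fin (m * 2)) ℂ :=
  Matrix.of fun i j =>
    if (i : ℕ) / 2 = (j : ℕ) / 2 then
      M ((i : ℕ) / 2) ⟨(i : ℕ) % 2, by omega⟩ ⟨(j : ℕ) % 2, by omega⟩
    else 0

noncomputable def wsh : (n : ℕ) → (Fin n → Bool) → ℕ → ℝ
  | 0, _, _ => 1
  | (n+1), f, k => wsh n (fun i => f i.castSucc) (k / 2) *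
      (if f (Fin.last n) ∧ k % 2 = 1 then -1 else 1)

lemma izBit_eq (b : Bool) :
    izBit b = diagonal (fun a : Fin 2 => if b ∧ (a : ℕ) = 1 then (-1 : ℂ) else 1) := by
  cases b <;> ext i j <;> fin_cases i <;> fin_cases j <;>
    simp [izBit, σ3, diagonal, Matrix.one_apply]

lemma σ3_eq : σ3 = diagonal (fun a : Fin 2 => if (a : ℕ) = 1 then (-1 : ℂ) else 1) := by
  have := izBit_eq true
  simpa [izBit] using this

lemma kronLast_diagonal {k : ℕ} (u : Fin k → ℂ) (v : Fin 2 → ℂ) :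
    kronLast (diagonal u) (diagonal v) =
      diagonal (fun i : Fin (k * 2) => u ⟨(i : ℕ) / 2, by omega⟩ * v ⟨(i : ℕ) % 2, by omega⟩) := by
  ext i j
  by_cases h : i = j
  · subst h; simp [kronLast, diagonal]
  · have hne : (i : ℕ) ≠ (j : ℕ) := fun hh => h (Fin.ext hh)
    have : ((i : ℕ) / 2 ≠ (j : ℕ) / 2) ∨ ((i : ℕ) % 2 ≠ (j : ℕ) % 2) := by omega
    rcases this with h1 | h1 <;>
      simp [kronLast, diagonal_apply, Fin.ext_iff, h, h1]

lemma IZ_eq : ∀ (n : ℕ) (f : Fin n → Bool),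
    IZ n f = diagonal (fun i : Fin (2 ^ n) => (wsh n f (i : ℕ) : ℂ))
  | 0, f => by
    ext i j
    fin_cases i; fin_cases j
    simp [IZ, wsh, diagonal]
  | (n+1), f => by
    show kronLast (IZ n fun i => f i.castSucc) (izBit (f (Fin.last n))) = _
    rw [IZ_eq n, izBit_eq, kronLast_diagonal]
    have key : ∀ i : Fin (2 ^ n * 2), (wsh n (fun i => f i.castSucc) ((i : ℕ) / 2) : ℂ) *
        (if f (Fin.last n) = true ∧ (i : ℕ) % 2 = 1 then (-1 : ℂ) else 1) =
        (wsh (n + 1) f (i : ℕ) : ℂ) := by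
      intro i
      rw [wsh]
      push_cast [apply_ite (fun r : ℝ => (r : ℂ))]
      ring
    exact congrArg diagonal (funext fun i => key i)

lemma kron_IZ_σ3 (n : ℕ) (f : Fin n → Bool) :
    kronLast (IZ n f) σ3 = diagonal (fun i : Fin (2 ^ n * 2) =>
      (wsh n f ((i : ℕ) / 2) : ℂ) * (if (i : ℕ) % 2 = 1 then -1 else 1)) := by
  rw [IZ_eq n, σ3_eq, kronLast_diagonal]

lemma exp_factor (n : ℕ) (f : Fin n → Bool) (t : ℝ) :
    NormedSpace.exp ((Complex.I * (t : ℂ)) • kronLast (IZ n f) σ3) =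
      diagonal (fun i : Fin (2 ^ n * 2) => Complex.exp (Complex.I * (t : ℂ) *
        ((wsh n f ((i : ℕ) / 2) : ℂ) * (if (i : ℕ) % 2 = 1 then -1 else 1)))) := by
  rw [kron_IZ_σ3, ← Matrix.diagonal_smul, Matrix.exp_diagonal]
  refine congrArg diagonal (funext fun i => ?_)
  rw [Pi.exp_def]
  simp [← Complex.exp_eq_exp_ℂ]

lemma diag_list_prod {m : ℕ} (g : (Fin m → Bool) → Fin (2 ^ m * 2) → ℂ) :
    ((Finset.univ : Finset (Fin m → Bool)).toList.map (fun f => diagonal (g f))).prod =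
      diagonal (fun i => ∏ f : Fin m → Bool, g f i) := by
  rw [show (fun f : Fin m → Bool => diagonal (g f)) =
    (Matrix.diagonalRingHom (Fin (2 ^ m * 2)) ℂ) ∘ g from rfl, ← List.map_map,
    ← map_list_prod (Matrix.diagonalRingHom (Fin (2 ^ m * 2)) ℂ)]
  refine congrArg diagonal (funext fun i => ?_)
  rw [Pi.list_prod_apply, List.map_map]
  rw [show ((fun f : Fin (2 ^ m * 2) → ℂ => f i) ∘ g) = fun f => g f i from rfl,
    Finset.prod_map_toList]

lemma prod_exp_eq (n : ℕ) (t : (Fin n → Bool) → ℝ) :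
    ((Finset.univ : Finset (Fin n → Bool)).toList.map
        (fun f => NormedSpace.exp ((Complex.I * (t f : ℂ)) • kronLast (IZ n f) σ3))).prod =
      diagonal (fun i : Fin (2 ^ n * 2) => Complex.exp (Complex.I *
        ((if (i : ℕ) % 2 = 1 then (-1 : ℂ) else 1) *
          (∑ f : Fin n → Bool, t f * wsh n f ((i : ℕ) / 2))))) := by
  have h1 : (fun f : Fin n → Bool =>
      NormedSpace.exp ((Complex.I * (t f : ℂ)) • kronLast (IZ n f) σ3)) =
      fun f => diagonal (fun i : Fin (2 ^ n * 2) => Complex.exp (Complex.I * (t f : ℂ) *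
        ((wsh n f ((i : ℕ) / 2) : ℂ) * (if (i : ℕ) % 2 = 1 then -1 else 1)))) := by
    funext f; exact exp_factor n f (t f)
  rw [h1, diag_list_prod]
  refine congrArg diagonal (funext fun i => ?_)
  rw [← Complex.exp_sum]
  congr 1
  push_cast
  simp only [Finset.mul_sum]
  exact Finset.sum_congr rfl fun f _ => by ring

lemma wsh_ortho : ∀ (n : ℕ) (k k' : ℕ), k < 2 ^ n → k' < 2 ^ n →
    (∑ f : Fin n → Bool, wsh n f k * wsh n f k') = if k = k' then (2 ^ n : ℝ) else 0
  | 0, k, k', hk, hk' => by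
    interval_cases k
    interval_cases k'
    simp [wsh]
  | (n+1), k, k', hk, hk' => by
    have key : (∑ f : Fin (n+1) → Bool, wsh (n+1) f k * wsh (n+1) f k')
        = ∑ p : Bool × (Fin n → Bool), (wsh n p.2 (k / 2) * wsh n p.2 (k' / 2)) *
            ((if p.1 = true ∧ k % 2 = 1 then (-1:ℝ) else 1) *
             (if p.1 = true ∧ k' % 2 = 1 then (-1:ℝ) else 1)) := by
      refine (Fintype.sum_equiv (Fin.snocEquiv (fun _ => Bool)) _ _ fun p => ?_).symm
      rw [wsh, wsh]
      have h1 : ((fun i => (Fin.snocEquiv (fun _ => Bool)) p (Fin.castSucc i)) : Fin n → Bool)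
          = p.2 := by
        funext i; simp [Fin.snocEquiv]
      have h2 : (Fin.snocEquiv (fun _ => Bool)) p (Fin.last n) = p.1 := by
        simp [Fin.snocEquiv]
      rw [h1, h2]; ring
    calc ∑ f : Fin (n+1) → Bool, wsh (n+1) f k * wsh (n+1) f k'
      _ = ∑ g : Fin n → Bool, ∑ b : Bool, (wsh n g (k / 2) * wsh n g (k' / 2)) *
            ((if b = true ∧ k % 2 = 1 then (-1:ℝ) else 1) *
             (if b = true ∧ k' % 2 = 1 then (-1:ℝ) else 1)) := by
          rw [key, Fintype.sum_prod_type_right]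
      _ = ∑ g : Fin n → Bool, (wsh n g (k / 2) * wsh n g (k' / 2)) *
            (if k % 2 = k' % 2 then (2:ℝ) else 0) := by
          refine Finset.sum_congr rfl fun g _ => ?_
          rw [Fintype.sum_bool]
          rcases Nat.mod_two_eq_zero_or_one k with h1 | h1 <;>
            rcases Nat.mod_two_eq_zero_or_one k' with h2 | h2 <;>
            simp [h1, h2] <;> ring
      _ = (if k / 2 = k' / 2 then (2^n : ℝ) else 0) * (if k % 2 = k' % 2 then 2 else 0) := by
          rw [← Finset.sum_mul, wsh_ortho n (k / 2) (k' / 2) (by omega) (by omega)]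
      _ = if k = k' then (2 ^ (n+1) : ℝ) else 0 := by
          rcases eq_or_ne k k' with h | h
          · subst h; simp [pow_succ]
          · have h1 : k / 2 ≠ k' / 2 ∨ k % 2 ≠ k' % 2 := by omega
            rcases h1 with h1 | h1 <;> simp [h1, h]

lemma wsh_coeff (n : ℕ) (θ : ℕ → ℝ) (k : ℕ) (hk : k < 2 ^ n) :
    (∑ f : Fin n → Bool,
      ((2 ^ n : ℝ)⁻¹ * ∑ k' ∈ Finset.range (2 ^ n), wsh n f k' * θ k') * wsh n f k) = θ k := by
  have h1 : ∀ f : Fin n → Bool,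
      ((2 ^ n : ℝ)⁻¹ * ∑ k' ∈ Finset.range (2 ^ n), wsh n f k' * θ k') * wsh n f k =
        (2 ^ n : ℝ)⁻¹ * ∑ k' ∈ Finset.range (2 ^ n), (wsh n f k * wsh n f k') * θ k' := by
    intro f
    simp only [Finset.sum_mul, Finset.mul_sum]
    exact Finset.sum_congr rfl fun k' _ => by ring
  rw [Finset.sum_congr rfl fun f _ => h1 f, ← Finset.mul_sum, Finset.sum_comm]
  have h2 : ∀ k' ∈ Finset.range (2 ^ n),
      (∑ f : Fin n → Bool, (wsh n f k * wsh n f k') * θ k') =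
        (if k = k' then (2 ^ n : ℝ) else 0) * θ k' := by
    intro k' hk'
    rw [← Finset.sum_mul, wsh_ortho n k k' hk (Finset.mem_range.mp hk')]
  rw [Finset.sum_congr rfl h2]
  simp only [ite_mul, zero_mul]
  rw [Finset.sum_ite_eq, if_pos (Finset.mem_range.mpr hk), ← mul_assoc,
    inv_mul_cancel₀ (by positivity : (2 ^ n : ℝ) ≠ 0), one_mul]

def blkE (m : ℕ) : Fin (m * 2) ≃ Fin 2 × Fin m where
  toFun i := (⟨(i : ℕ) % 2, by omega⟩, ⟨(i : ℕ) / 2, by have := i.isLt; omega⟩)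
  invFun p := ⟨(p.2 : ℕ) * 2 + (p.1 : ℕ), by have := p.1.isLt; have := p.2.isLt; omega⟩
  left_inv i := by ext; simp; omega
  right_inv p := by
    obtain ⟨⟨a, ha⟩, ⟨b, hb⟩⟩ := p
    refine Prod.ext ?_ ?_ <;> ext <;> simp <;> omega

lemma blockDiag2_eq (m : ℕ) (M : ℕ → Matrix (Fin 2) (Fin 2) ℂ) :
    blockDiag2 m M =
      (blockDiagonal (fun j : Fin m => M (j : ℕ))).submatrix (blkE m) (blkE m) := by
  ext i j
  simp only [blockDiag2, Matrix.of_apply, Matrix.submatrix_apply, blkE, Equiv.coe_fn_mk,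
    Matrix.blockDiagonal_apply, Fin.ext_iff]

lemma blockDiag2_mul (m : ℕ) (M N : ℕ → Matrix (Fin 2) (Fin 2) ℂ) :
    blockDiag2 m M * blockDiag2 m N = blockDiag2 m (fun j => M j * N j) := by
  rw [blockDiag2_eq, blockDiag2_eq, blockDiag2_eq,
    Matrix.submatrix_mul_equiv (blockDiagonal (fun j : Fin m => M (j : ℕ)))
      (blockDiagonal (fun j : Fin m => N (j : ℕ))) _ (blkE m) _,
    Matrix.blockDiagonal_mul]

lemma blockDiag2_diagonal (m : ℕ) (w : ℕ → Fin 2 → ℂ) :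
    blockDiag2 m (fun j => diagonal (w j)) =
      diagonal (fun i : Fin (m * 2) => w ((i : ℕ) / 2) ⟨(i : ℕ) % 2, by omega⟩) := by
  ext i j
  by_cases h : i = j
  · subst h; simp [blockDiag2, diagonal]
  · have hne : (i : ℕ) ≠ (j : ℕ) := fun hh => h (Fin.ext hh)
    have h2 : ((i : ℕ) / 2 ≠ (j : ℕ) / 2) ∨ ((i : ℕ) % 2 ≠ (j : ℕ) % 2) := by omega
    rcases h2 with h1 | h1 <;>
      simp [blockDiag2, diagonal_apply, h, h1, Fin.ext_iff]

lemma RZ_eq (θ : ℝ) : RZ θ = diagonal (fun a : Fin 2 =>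
    Complex.exp (Complex.I * ((if (a : ℕ) = 1 then (-1 : ℂ) else 1) * θ))) := by
  ext i j
  fin_cases i <;> fin_cases j <;> simp [RZ, diagonal]

lemma Umat_eq (a b c : ℝ) : Umat a b c = RZ a * RY c * RZ b := by
  rw [RZ, RY, RZ, Umat, Matrix.mul_fin_two, Matrix.mul_fin_two]
  ext i j
  have key : ∀ x y w : ℂ, Complex.exp x * w * Complex.exp y = Complex.exp (x + y) * w := by
    intro x y w; rw [Complex.exp_add]; ring
  fin_cases i <;> fin_cases j <;> simp
  all_goals (rw [key]; congr 1; · congr 1; ring)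

lemma hRZ (n : ℕ) (θ : ℕ → ℝ) : blockDiag2 (2 ^ n) (fun j => RZ (θ j)) =
    diagonal (fun i : Fin (2 ^ n * 2) =>
      Complex.exp (Complex.I * ((if (i : ℕ) % 2 = 1 then (-1 : ℂ) else 1) * θ ((i : ℕ) / 2)))) := by
  have h1 : (fun j : ℕ => RZ (θ j)) = fun j => diagonal (fun a : Fin 2 =>
      Complex.exp (Complex.I * ((if (a : ℕ) = 1 then (-1 : ℂ) else 1) * θ j))) :=
    funext fun j => RZ_eq (θ j)
  rw [h1, blockDiag2_diagonal]

/-- For every `n ≥ 1` (here written as `n + 1`) and all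
`α, β, γ ∈ ℝ^(2^n)`, there exist reals `t_A`, `t'_A` indexed by the IZ-strings `A` of length
`n` such that `blockdiag(U(α_j,β_j,γ_j))_j = (∏_A exp(i t_A (A ⊗ σ3))) ⬝
blockdiag(R_Y(γ_j))_j ⬝ (∏_A exp(i t'_A (A ⊗ σ3)))`. -/
theorem blockdiag_exp_decomp (n : ℕ) (α β γ : ℕ → ℝ) :
    ∃ t t' : (Fin n → Bool) → ℝ,
      blockDiag2 (2 ^ n) (fun j => Umat (α j) (β j) (γ j)) =
        ((Finset.univ : Finset (Fin n → Bool)).toList.map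
            (fun f => NormedSpace.exp ((Complex.I * (t f : ℂ)) • kronLast (IZ n f) σ3))).prod *
          blockDiag2 (2 ^ n) (fun j => RY (γ j)) *
          ((Finset.univ : Finset (Fin n → Bool)).toList.map
            (fun f =>
              NormedSpace.exp ((Complex.I * (t' f : ℂ)) • kronLast (IZ n f) σ3))).prod := by
  refine ⟨fun f => (2 ^ n : ℝ)⁻¹ * ∑ k' ∈ Finset.range (2 ^ n), wsh n f k' * α k',
          fun f => (2 ^ n : ℝ)⁻¹ * ∑ k' ∈ Finset.range (2 ^ n), wsh n f k' * β k', ?_⟩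
  rw [prod_exp_eq, prod_exp_eq]
  have key : ∀ θ : ℕ → ℝ,
      diagonal (fun i : Fin (2 ^ n * 2) => Complex.exp (Complex.I *
        ((if (i : ℕ) % 2 = 1 then (-1 : ℂ) else 1) *
          (∑ f : Fin n → Bool,
            ((2 ^ n : ℝ)⁻¹ * ∑ k' ∈ Finset.range (2 ^ n), wsh n f k' * θ k') *
              wsh n f ((i : ℕ) / 2))))) = blockDiag2 (2 ^ n) (fun j => RZ (θ j)) := by
    intro θ
    rw [hRZ n θ]
    refine congrArg diagonal (funext fun i => ?_)
    rw [wsh_coeff n θ ((i : ℕ) / 2) (by have := i.isLt; omega)]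
  rw [key α, key β, blockDiag2_mul, blockDiag2_mul]
  exact congrArg (blockDiag2 (2 ^ n)) (funext fun j => Umat_eq (α j) (β j) (γ j))
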